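/- Let B be a ℤ-graded bialgebra over a field k satisfying the twisting conditions, and let (τ, μ) be a twisting pair of B. Set α_i := ε∘τ_i for i ∈ ℤ. Then: {α_i}_{i∈ℤ} is a system of twisting functionals on B, each α_i is convolution invertible with inverse α_i^{-1} = ε∘μ_i; τ_i = Ξ^r[α_i] and μ_i = Ξ^l[α_i^{-1}] for all i; and for all i, j ∈ ℤ one has (P3) τ_i∘μ_j = μ_j∘τ_i and (P4) (τ_i ⊗ μ_i)∘Δ = Δ. -/

import Mathlib

open TensorProduct

/-- Convolution product of linear functionals on a coalgebra. -/
noncomputable def conv {k B : Type*} [CommSemiring k] [AddCommMonoid B] [Module k B]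
    [Coalgebra k B] (f g : B →ₗ[k] k) : B →ₗ[k] k :=
  LinearMap.mul' k k ∘ₗ TensorProduct.map f g ∘ₗ Coalgebra.comul

/-- The right winding map `Ξ^r[π](b) = Σ b_1 π(b_2)`. -/
noncomputable def windR {k B : Type*} [CommSemiring k] [AddCommMonoid B] [Module k B]
    [Coalgebra k B] (π : B →ₗ[k] k) : B →ₗ[k] B :=
  (TensorProduct.rid k B).toLinearMap ∘ₗ TensorProduct.map LinearMap.id π ∘ₗ Coalgebra.comul

/-- The left winding map `Ξ^l[π](b) = Σ π(b_1) b_2`. -/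
noncomputable def windL {k B : Type*} [CommSemiring k] [AddCommMonoid B] [Module k B]
    [Coalgebra k B] (π : B →ₗ[k] k) : B →ₗ[k] B :=
  (TensorProduct.lid k B).toLinearMap ∘ₗ TensorProduct.map π LinearMap.id ∘ₗ Coalgebra.comul

/-- A system of twisting functionals on a ℤ-graded bialgebra `B`. -/
def IsTwistingFunctionalSystem {k B : Type*} [CommSemiring k] [Semiring B] [Bialgebra k B]
    (𝒜 : ℤ → Submodule k B) (α : ℤ → (B →ₗ[k] k)) : Prop :=
  (∀ i : ℤ, ∃ αinv : B →ₗ[k] k, conv (α i) αinv = Coalgebra.counit ∧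
    conv αinv (α i) = Coalgebra.counit) ∧
  (∀ i : ℤ, α i 1 = 1) ∧
  (α 0 = Coalgebra.counit) ∧
  (∀ (i j : ℤ), ∀ a ∈ 𝒜 j, ∀ b : B,
    conv ((α i) ∘ₗ LinearMap.mulLeft k a) (α j) b = α i a * α (i + j) b)

/-- A twisting system of a ℤ-graded algebra. -/
def IsTwistingSystem {k A : Type*} [CommSemiring k] [Semiring A] [Algebra k A]
    (𝒜 : ℤ → Submodule k A) (τ : ℤ → (A →ₗ[k] A)) : Prop :=
  (∀ i : ℤ, Function.Bijective (τ i)) ∧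
  (∀ (i n : ℤ), ∀ a ∈ 𝒜 n, τ i a ∈ 𝒜 n) ∧
  (τ 0 = LinearMap.id) ∧
  (∀ i : ℤ, τ i 1 = 1) ∧
  (∀ (i j : ℤ), ∀ a ∈ 𝒜 j, ∀ b : A, τ i (a * τ j b) = τ i a * τ (i + j) b)

section AuxLemmas

variable {k B : Type*} [CommSemiring k] [AddCommMonoid B] [Module k B] [Coalgebra k B]

lemma windR_apply' (π : B →ₗ[k] k) {b : B} {ι : Type*} (r : Coalgebra.Repr k b ι) :
    windR π b = ∑ i ∈ r.index, π (r.right i) • r.left i := by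
  simp [windR, ← r.eq, map_sum]

lemma windL_apply' (π : B →ₗ[k] k) {b : B} {ι : Type*} (r : Coalgebra.Repr k b ι) :
    windL π b = ∑ i ∈ r.index, π (r.left i) • r.right i := by
  simp [windL, ← r.eq, map_sum]

lemma conv_apply' (f g : B →ₗ[k] k) {b : B} {ι : Type*} (r : Coalgebra.Repr k b ι) :
    conv f g b = ∑ i ∈ r.index, f (r.left i) * g (r.right i) := by
  simp [conv, ← r.eq, map_sum]

lemma windR_counit : windR (Coalgebra.counit : B →ₗ[k] k) = LinearMap.id := by
  ext b
  have h := congrArg (TensorProduct.rid k B)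
    (Coalgebra.sum_tmul_counit_eq (R := k) (Coalgebra.Repr.arbitrary k b))
  simp only [map_sum, TensorProduct.rid_tmul, one_smul] at h
  simpa [windR_apply' _ (Coalgebra.Repr.arbitrary k b)] using h

lemma windL_counit : windL (Coalgebra.counit : B →ₗ[k] k) = LinearMap.id := by
  ext b
  have h := congrArg (TensorProduct.lid k B)
    (Coalgebra.sum_counit_tmul_eq (R := k) (Coalgebra.Repr.arbitrary k b))
  simp only [map_sum, TensorProduct.lid_tmul, one_smul] at h
  simpa [windL_apply' _ (Coalgebra.Repr.arbitrary k b)] using h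

lemma conv_eq_comp_windR (f g : B →ₗ[k] k) : conv f g = f ∘ₗ windR g := by
  ext b
  rw [LinearMap.comp_apply, conv_apply' f g (Coalgebra.Repr.arbitrary k b),
    windR_apply' g (Coalgebra.Repr.arbitrary k b), map_sum]
  refine Finset.sum_congr rfl fun i _ => ?_
  rw [map_smul, smul_eq_mul, mul_comm]

lemma conv_eq_comp_windL (f g : B →ₗ[k] k) : conv f g = g ∘ₗ windL f := by
  ext b
  rw [LinearMap.comp_apply, conv_apply' f g (Coalgebra.Repr.arbitrary k b),
    windL_apply' f (Coalgebra.Repr.arbitrary k b), map_sum]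
  refine Finset.sum_congr rfl fun i _ => ?_
  rw [map_smul, smul_eq_mul]

lemma conv_counit_left (g : B →ₗ[k] k) : conv Coalgebra.counit g = g := by
  rw [conv_eq_comp_windL, windL_counit, LinearMap.comp_id]

lemma conv_counit_right (f : B →ₗ[k] k) : conv f Coalgebra.counit = f := by
  rw [conv_eq_comp_windR, windR_counit, LinearMap.comp_id]

lemma counit_comp_windR (π : B →ₗ[k] k) :
    (Coalgebra.counit : B →ₗ[k] k) ∘ₗ windR π = π := by
  rw [← conv_eq_comp_windR, conv_counit_left]

lemma windR_comp_windR (π σ : B →ₗ[k] k) :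
    windR π ∘ₗ windR σ = windR (conv π σ) := by
  ext b
  set r := Coalgebra.Repr.arbitrary k b with hr
  set a₁ : (i : B × B) → Coalgebra.Repr k (r.left i) (B × B) := fun i => Coalgebra.Repr.arbitrary k (r.left i) with ha₁
  set a₂ : (i : B × B) → Coalgebra.Repr k (r.right i) (B × B) := fun i => Coalgebra.Repr.arbitrary k (r.right i) with ha₂
  have key := congrArg ((TensorProduct.rid k B).toLinearMap ∘ₗ
      TensorProduct.map LinearMap.id (LinearMap.mul' k k ∘ₗ TensorProduct.map π σ))
    (Coalgebra.sum_tmul_tmul_eq r a₁ a₂)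
  simp only [map_sum, LinearMap.coe_comp, LinearEquiv.coe_coe, Function.comp_apply,
    TensorProduct.map_tmul, LinearMap.id_coe, id_eq, LinearMap.mul'_apply,
    TensorProduct.rid_tmul] at key
  rw [LinearMap.comp_apply, windR_apply' σ r, map_sum, windR_apply' (conv π σ) r]
  have lhs : ∀ i ∈ r.index, windR π (σ (r.right i) • r.left i)
      = ∑ j ∈ (a₁ i).index, (π ((a₁ i).right j) * σ (r.right i)) • (a₁ i).left j := by
    intro i _
    rw [map_smul, windR_apply' π (a₁ i), Finset.smul_sum]
    exact Finset.sum_congr rfl fun j _ => by rw [smul_smul, mul_comm]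
  have rhs : ∀ i ∈ r.index, conv π σ (r.right i) • r.left i
      = ∑ j ∈ (a₂ i).index, (π ((a₂ i).left j) * σ ((a₂ i).right j)) • r.left i := by
    intro i _
    rw [conv_apply' π σ (a₂ i), Finset.sum_smul]
  rw [Finset.sum_congr rfl lhs, Finset.sum_congr rfl rhs]
  exact key

lemma windR_comm_windL (π σ : B →ₗ[k] k) :
    windR π ∘ₗ windL σ = windL σ ∘ₗ windR π := by
  ext b
  set r := Coalgebra.Repr.arbitrary k b with hr
  set a₁ : (i : B × B) → Coalgebra.Repr k (r.left i) (B × B) := fun i => Coalgebra.Repr.arbitrary k (r.left i) with ha₁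
  set a₂ : (i : B × B) → Coalgebra.Repr k (r.right i) (B × B) := fun i => Coalgebra.Repr.arbitrary k (r.right i) with ha₂
  have key := congrArg ((TensorProduct.lid k B).toLinearMap ∘ₗ
      TensorProduct.map σ ((TensorProduct.rid k B).toLinearMap ∘ₗ
        TensorProduct.map LinearMap.id π))
    (Coalgebra.sum_tmul_tmul_eq r a₁ a₂)
  simp only [map_sum, LinearMap.coe_comp, LinearEquiv.coe_coe, Function.comp_apply,
    TensorProduct.map_tmul, LinearMap.id_coe, id_eq, TensorProduct.rid_tmul,
    TensorProduct.lid_tmul] at key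
  rw [LinearMap.comp_apply, LinearMap.comp_apply, windL_apply' σ r, windR_apply' π r,
    map_sum, map_sum]
  have lhs : ∀ i ∈ r.index, windR π (σ (r.left i) • r.right i)
      = ∑ j ∈ (a₂ i).index, σ (r.left i) • π ((a₂ i).right j) • (a₂ i).left j := by
    intro i _
    rw [map_smul, windR_apply' π (a₂ i), Finset.smul_sum]
  have rhs : ∀ i ∈ r.index, windL σ (π (r.right i) • r.left i)
      = ∑ j ∈ (a₁ i).index, σ ((a₁ i).left j) • π (r.right i) • (a₁ i).right j := by
    intro i _
    rw [map_smul, windL_apply' σ (a₁ i), Finset.smul_sum]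
    exact Finset.sum_congr rfl fun j _ => by rw [smul_comm]
  rw [Finset.sum_congr rfl lhs, Finset.sum_congr rfl rhs]
  exact key.symm

lemma lTensor_windL_comp_comul (π : B →ₗ[k] k) :
    LinearMap.lTensor B (windL π) ∘ₗ Coalgebra.comul
      = LinearMap.rTensor B (windR π) ∘ₗ Coalgebra.comul (R := k) := by
  ext b
  set r := Coalgebra.Repr.arbitrary k b with hr
  set a₁ : (i : B × B) → Coalgebra.Repr k (r.left i) (B × B) := fun i => Coalgebra.Repr.arbitrary k (r.left i) with ha₁
  set a₂ : (i : B × B) → Coalgebra.Repr k (r.right i) (B × B) := fun i => Coalgebra.Repr.arbitrary k (r.right i) with ha₂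
  have key := congrArg (TensorProduct.map (LinearMap.id : B →ₗ[k] B)
      ((TensorProduct.lid k B).toLinearMap ∘ₗ TensorProduct.map π LinearMap.id))
    (Coalgebra.sum_tmul_tmul_eq r a₁ a₂)
  simp only [map_sum, LinearMap.coe_comp, LinearEquiv.coe_coe, Function.comp_apply,
    TensorProduct.map_tmul, LinearMap.id_coe, id_eq, TensorProduct.lid_tmul,
    TensorProduct.tmul_smul] at key
  rw [LinearMap.comp_apply, LinearMap.comp_apply, ← r.eq, map_sum, map_sum]
  have lhs : ∀ i ∈ r.index,
      LinearMap.lTensor B (windL π) (r.left i ⊗ₜ[k] r.right i)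
      = ∑ j ∈ (a₂ i).index, π ((a₂ i).left j) • (r.left i ⊗ₜ[k] (a₂ i).right j) := by
    intro i _
    rw [LinearMap.lTensor_tmul, windL_apply' π (a₂ i), TensorProduct.tmul_sum]
    exact Finset.sum_congr rfl fun j _ => by rw [TensorProduct.tmul_smul]
  have rhs : ∀ i ∈ r.index,
      LinearMap.rTensor B (windR π) (r.left i ⊗ₜ[k] r.right i)
      = ∑ j ∈ (a₁ i).index, π ((a₁ i).right j) • ((a₁ i).left j ⊗ₜ[k] r.right i) := by
    intro i _
    rw [LinearMap.rTensor_tmul, windR_apply' π (a₁ i), TensorProduct.sum_tmul]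
    exact Finset.sum_congr rfl fun j _ => by rw [TensorProduct.smul_tmul']
  rw [Finset.sum_congr rfl lhs, Finset.sum_congr rfl rhs]
  exact key.symm

lemma windR_natural (π : B →ₗ[k] k) (f : B →ₗ[k] B)
    (h : Coalgebra.comul ∘ₗ f = TensorProduct.map LinearMap.id f ∘ₗ Coalgebra.comul (R := k)) :
    windR (π ∘ₗ f) = windR π ∘ₗ f := by
  unfold windR
  rw [show TensorProduct.map (LinearMap.id : B →ₗ[k] B) (π ∘ₗ f)
      = TensorProduct.map LinearMap.id π ∘ₗ TensorProduct.map LinearMap.id f by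
    rw [← TensorProduct.map_comp, LinearMap.id_comp]]
  simp only [LinearMap.comp_assoc]
  rw [← h]

lemma windL_natural (π : B →ₗ[k] k) (f : B →ₗ[k] B)
    (h : Coalgebra.comul ∘ₗ f = TensorProduct.map f LinearMap.id ∘ₗ Coalgebra.comul (R := k)) :
    windL (π ∘ₗ f) = windL π ∘ₗ f := by
  unfold windL
  rw [show TensorProduct.map (π ∘ₗ f) (LinearMap.id : B →ₗ[k] B)
      = TensorProduct.map π LinearMap.id ∘ₗ TensorProduct.map f LinearMap.id by
    rw [← TensorProduct.map_comp, LinearMap.id_comp]]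
  simp only [LinearMap.comp_assoc]
  rw [← h]

end AuxLemmas

/-- For a twisting pair `(τ, μ)` of a ℤ-graded bialgebra `B` satisfying the
twisting conditions, setting `α_i = ε ∘ τ_i`: the `α_i` form a system of twisting
functionals, each convolution invertible with inverse `ε ∘ μ_i`; `τ_i = Ξ^r[α_i]` and
`μ_i = Ξ^l[ε ∘ μ_i]`; and (P3) `τ_i ∘ μ_j = μ_j ∘ τ_i`, (P4) `(τ_i ⊗ μ_i) ∘ Δ = Δ`. -/
theorem statement10 {k B : Type*} [Field k] [Ring B] [Bialgebra k B]
    (𝒜 : ℤ → Submodule k B) [GradedAlgebra 𝒜]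
    (hT2 : ∀ n : ℤ, ∀ b ∈ 𝒜 n,
      Coalgebra.comul (R := k) b ∈ LinearMap.range (TensorProduct.mapIncl (𝒜 n) (𝒜 n)))
    (τ μ : ℤ → (B →ₗ[k] B))
    (hτ : IsTwistingSystem 𝒜 τ) (hμ : IsTwistingSystem 𝒜 μ)
    (hP1τ : ∀ i : ℤ, Coalgebra.comul (R := k) ∘ₗ τ i =
      TensorProduct.map LinearMap.id (τ i) ∘ₗ Coalgebra.comul)
    (hP1μ : ∀ i : ℤ, Coalgebra.comul (R := k) ∘ₗ μ i =
      TensorProduct.map (μ i) LinearMap.id ∘ₗ Coalgebra.comul)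
    (hP2 : ∀ i : ℤ, Coalgebra.counit (R := k) ∘ₗ (τ i ∘ₗ μ i) = Coalgebra.counit) :
    IsTwistingFunctionalSystem 𝒜 (fun i => Coalgebra.counit ∘ₗ τ i) ∧
    (∀ i : ℤ,
      conv (Coalgebra.counit ∘ₗ τ i) (Coalgebra.counit ∘ₗ μ i) = Coalgebra.counit ∧
      conv (Coalgebra.counit ∘ₗ μ i) (Coalgebra.counit ∘ₗ τ i) = Coalgebra.counit) ∧
    (∀ i : ℤ, τ i = windR (Coalgebra.counit ∘ₗ τ i)) ∧
    (∀ i : ℤ, μ i = windL (Coalgebra.counit ∘ₗ μ i)) ∧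
    (∀ i j : ℤ, τ i ∘ₗ μ j = μ j ∘ₗ τ i) ∧
    (∀ i : ℤ, TensorProduct.map (τ i) (μ i) ∘ₗ Coalgebra.comul = Coalgebra.comul (R := k)) := by
  have hτw : ∀ i, τ i = windR (Coalgebra.counit ∘ₗ τ i) := fun i => by
    rw [windR_natural _ _ (hP1τ i), windR_counit, LinearMap.id_comp]
  have hμw : ∀ i, μ i = windL (Coalgebra.counit ∘ₗ μ i) := fun i => by
    rw [windL_natural _ _ (hP1μ i), windL_counit, LinearMap.id_comp]
  have hβα : ∀ i, conv (Coalgebra.counit ∘ₗ μ i) (Coalgebra.counit ∘ₗ τ i)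
      = Coalgebra.counit := fun i => by
    rw [conv_eq_comp_windL, ← hμw i]
    simp only [LinearMap.comp_assoc]
    exact hP2 i
  have hαβ : ∀ i, conv (Coalgebra.counit ∘ₗ τ i) (Coalgebra.counit ∘ₗ μ i)
      = Coalgebra.counit := fun i => by
    have h1 : windR (Coalgebra.counit ∘ₗ μ i) ∘ₗ windR (Coalgebra.counit ∘ₗ τ i)
        = LinearMap.id := by
      rw [windR_comp_windR, hβα i, windR_counit]
    have h2 : windR (Coalgebra.counit ∘ₗ τ i) ∘ₗ windR (Coalgebra.counit ∘ₗ μ i)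
        = LinearMap.id := by
      ext b
      obtain ⟨c, hc⟩ := (hτ.1 i).2 b
      have hc' : windR (Coalgebra.counit ∘ₗ τ i) c = b := by rw [← hτw i]; exact hc
      have h3 := LinearMap.congr_fun h1 c
      simp only [LinearMap.comp_apply, LinearMap.id_apply] at h3 ⊢
      rw [← hc', h3]
    rw [← counit_comp_windR (conv (Coalgebra.counit ∘ₗ τ i) (Coalgebra.counit ∘ₗ μ i)),
      ← windR_comp_windR, h2, LinearMap.comp_id]
  refine ⟨⟨fun i => ⟨Coalgebra.counit ∘ₗ μ i, hαβ i, hβα i⟩, ?_, ?_, ?_⟩,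
    fun i => ⟨hαβ i, hβα i⟩, hτw, hμw, ?_, ?_⟩
  · intro i
    show (Coalgebra.counit ∘ₗ τ i) 1 = 1
    rw [LinearMap.comp_apply, hτ.2.2.2.1 i, Bialgebra.counit_one]
  · show Coalgebra.counit ∘ₗ τ 0 = Coalgebra.counit
    rw [hτ.2.2.1, LinearMap.comp_id]
  · intro i j a ha b
    show conv ((Coalgebra.counit ∘ₗ τ i) ∘ₗ LinearMap.mulLeft k a)
        (Coalgebra.counit ∘ₗ τ j) b
      = (Coalgebra.counit ∘ₗ τ i) a * (Coalgebra.counit ∘ₗ τ (i + j)) b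
    rw [conv_eq_comp_windR, ← hτw j]
    simp only [LinearMap.comp_apply, LinearMap.mulLeft_apply]
    rw [hτ.2.2.2.2 i j a ha b, Bialgebra.counit_mul]
  · intro i j
    rw [hτw i, hμw j, windR_comm_windL]
  · intro i
    rw [hτw i, hμw i, ← LinearMap.rTensor_comp_lTensor, LinearMap.comp_assoc,
      lTensor_windL_comp_comul, ← LinearMap.comp_assoc, ← LinearMap.rTensor_comp,
      windR_comp_windR, hαβ i, windR_counit, LinearMap.rTensor_id, LinearMap.id_comp]
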